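/- arXiv:math/0308204 — 2 statements merged into one kernel-verified Lean document; each statement's English description precedes it below -/
import Mathlib

section
/- Let M ⊆ ℝ^{n+1} be an open set which is weakly star-shaped with center 0. Assume there exist R > 0 and a continuously differentiable function u on B̂_{2R} := {x̂ ∈ ℝ^n : |x̂| < 2R} with u(0) = 0 and Du(0) = 0 such that for every x = (x̂, x^{n+1}) with |x̂| < R and |x^{n+1}| < R one has x ∈ M ⟺ x^{n+1} > u(x̂). Then every x ∈ M satisfies x^{n+1} > 0; i.e., M lies on one side of the tangent hyperplane {x ∈ ℝ^{n+1} : x^{n+1} = 0}. -/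
open Metric

/-- `M` is weakly star-shaped with center `x`. -/
def WeaklyStarShaped {d : ℕ} (M : Set (EuclideanSpace ℝ (Fin d)))
    (x : EuclideanSpace ℝ (Fin d)) : Prop :=
  ∀ z ∈ M, ∀ τ : ℝ, 0 < τ → τ ≤ 1 → x + τ • (z - x) ∈ M

/-- The point of `ℝⁿ⁺¹` with base point `xhat ∈ ℝⁿ` and last coordinate `t`. -/
def pairPoint {n : ℕ} (xhat : EuclideanSpace ℝ (Fin n)) (t : ℝ) :
    EuclideanSpace ℝ (Fin (n + 1)) :=
  WithLp.toLp 2 (Fin.snoc (xhat : Fin n → ℝ) t)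

lemma pairPoint_smul {n : ℕ} (x : EuclideanSpace ℝ (Fin (n + 1))) (τ : ℝ) :
    pairPoint (τ • (WithLp.toLp 2 (fun i : Fin n => x i.castSucc) : EuclideanSpace ℝ (Fin n)))
      (τ * x (Fin.last n)) = τ • x := by
  ext i
  refine Fin.lastCases ?_ (fun j => ?_) i
  · simp [pairPoint, Fin.snoc_last]
  · simp [pairPoint, Fin.snoc_castSucc]

theorem weakly_star_shaped_lies_on_one_side {n : ℕ}
    (M : Set (EuclideanSpace ℝ (Fin (n + 1))))
    (hopen : IsOpen M)
    (hstar : WeaklyStarShaped M 0)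
    (R : ℝ) (hR : 0 < R)
    (u : EuclideanSpace ℝ (Fin n) → ℝ)
    (hu : ContDiffOn ℝ 1 u (ball 0 (2 * R))) (hu0 : u 0 = 0)
    (hDu0 : fderiv ℝ u 0 = 0)
    (hrep : ∀ xhat : EuclideanSpace ℝ (Fin n), ∀ s : ℝ, ‖xhat‖ < R → |s| < R →
      (pairPoint xhat s ∈ M ↔ u xhat < s)) :
    ∀ x ∈ M, 0 < x (Fin.last n) := by
  -- differentiability of u at 0 with derivative 0
  have h0ball : (0 : EuclideanSpace ℝ (Fin n)) ∈ ball (0 : EuclideanSpace ℝ (Fin n)) (2 * R) := by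
    simp [hR]
  have hdiff : DifferentiableAt ℝ u 0 :=
    (hu.contDiffAt (isOpen_ball.mem_nhds h0ball)).differentiableAt one_ne_zero
  have hfd : HasFDerivAt u (0 : EuclideanSpace ℝ (Fin n) →L[ℝ] ℝ) 0 := by
    have := hdiff.hasFDerivAt
    rwa [hDu0] at this
  -- key: no point of M has negative last coordinate
  have key : ∀ x ∈ M, ¬ x (Fin.last n) < 0 := by
    intro x hx hneg
    set xh : EuclideanSpace ℝ (Fin n) := WithLp.toLp 2 (fun i : Fin n => x i.castSucc) with hxh
    set s : ℝ := x (Fin.last n) with hs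
    -- derivative of τ ↦ u (τ • xh) at 0 is 0
    have hline : HasDerivAt (fun τ : ℝ => τ • xh) xh 0 := by
      have := (hasDerivAt_id (0 : ℝ)).smul_const xh
      simpa using this
    have hg : HasDerivAt (fun τ : ℝ => u (τ • xh)) 0 0 := by
      have hfd' : HasFDerivAt u (0 : EuclideanSpace ℝ (Fin n) →L[ℝ] ℝ) ((0:ℝ) • xh) := by
        simpa using hfd
      have := hfd'.comp_hasDerivAt 0 hline
      exact (by simpa using this : HasDerivAt (u ∘ fun τ : ℝ => τ • xh) 0 0)
    have hslope : Filter.Tendsto (slope (fun τ : ℝ => u (τ • xh)) 0)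
        (nhdsWithin 0 (Set.Ioi 0)) (nhds 0) := by
      have := hasDerivAt_iff_tendsto_slope.mp hg
      exact this.mono_left (nhdsWithin_mono _ (fun t ht => ne_of_gt ht))
    -- eventually slope < s
    set δ : ℝ := min 1 (R / (‖xh‖ + |s| + 1)) with hδ
    have hδpos : 0 < δ := lt_min one_pos (div_pos hR (by positivity))
    have hev : ∀ᶠ τ in nhdsWithin (0:ℝ) (Set.Ioi 0),
        slope (fun τ : ℝ => u (τ • xh)) 0 τ ≤ s := by
      filter_upwards [Ioo_mem_nhdsGT_of_mem (Set.mem_Ico.mpr ⟨le_refl (0:ℝ), hδpos⟩)]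
        with τ hτ
      obtain ⟨hτ0, hτδ⟩ := hτ
      have hτ1 : τ ≤ 1 := le_trans hτδ.le (min_le_left _ _)
      have hτR : τ * (‖xh‖ + |s| + 1) < R := by
        have h2 : τ < R / (‖xh‖ + |s| + 1) := lt_of_lt_of_le hτδ (min_le_right _ _)
        have h3 : (0:ℝ) < ‖xh‖ + |s| + 1 := by positivity
        calc τ * (‖xh‖ + |s| + 1) < (R / (‖xh‖ + |s| + 1)) * (‖xh‖ + |s| + 1) := by
              exact mul_lt_mul_of_pos_right h2 h3
          _ = R := div_mul_cancel₀ _ (ne_of_gt h3)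
      have hmem : τ • x ∈ M := by
        have := hstar x hx τ hτ0 hτ1
        simpa using this
      have hn1 : ‖τ • xh‖ < R := by
        rw [norm_smul, Real.norm_eq_abs, abs_of_pos hτ0]
        nlinarith [abs_nonneg s]
      have hn2 : |τ * s| < R := by
        rw [abs_mul, abs_of_pos hτ0]
        nlinarith [norm_nonneg xh]
      have hlt : u (τ • xh) < τ * s := by
        have := (hrep (τ • xh) (τ * s) hn1 hn2).mp (by rw [pairPoint_smul x τ]; exact hmem)
        exact this
      have : slope (fun τ : ℝ => u (τ • xh)) 0 τ = u (τ • xh) / τ := by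
        simp [slope_def_field, hu0]
      rw [this]
      rw [div_le_iff₀ hτ0]
      linarith [hlt, mul_comm s τ]
    have hle : (0:ℝ) ≤ s :=
      le_of_tendsto hslope hev
    linarith
  intro x hx
  by_contra hle
  push_neg at hle
  rcases lt_or_eq_of_le hle with hlt | heq
  · exact key x hx hlt
  · -- x last = 0; use openness to find nearby point with negative last coordinate
    obtain ⟨ε, hε, hball⟩ := Metric.isOpen_iff.mp hopen x hx
    set y : EuclideanSpace ℝ (Fin (n+1)) :=
      x - (ε/2) • EuclideanSpace.single (Fin.last n) (1:ℝ) with hy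
    have hyM : y ∈ M := by
      apply hball
      rw [mem_ball, dist_eq_norm]
      have : y - x = -((ε/2) • EuclideanSpace.single (Fin.last n) (1:ℝ)) := by
        rw [hy]; abel
      rw [this, norm_neg, norm_smul, EuclideanSpace.norm_single]
      rw [norm_one, mul_one, Real.norm_eq_abs, abs_of_pos (half_pos hε)]
      linarith
    have hyneg : y (Fin.last n) < 0 := by
      have : y (Fin.last n) = x (Fin.last n) - ε/2 := by
        simp [hy, EuclideanSpace.single_apply]
      rw [this, ← heq]
      linarith
    exact key y hyM hyneg
end

section
/- Let M ⊆ ℝ^n be a Lebesgue-measurable set and let (x̂, t) ∈ ℝ^n × ℝ = ℝ^{n+1} with x̂ ≠ 0. If the product set M × ℝ ⊆ ℝ^{n+1} is directed with respect to (x̂, t) (with densities taken with respect to (n+1)-dimensional Lebesgue measure and balls in ℝ^{n+1}), then M is directed with respect to x̂ (with densities taken with respect to n-dimensional Lebesgue measure and balls in ℝ^n). -/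
open MeasureTheory Metric

/-- Approximate density of a set `M` at `x` with respect to radius `ρ`. -/
noncomputable def approxDensity {d : ℕ} (M : Set (EuclideanSpace ℝ (Fin d))) (ρ : ℝ)
    (x : EuclideanSpace ℝ (Fin d)) : ENNReal :=
  volume (M ∩ ball x ρ) / volume (ball x ρ)

/-- `M` is directed with respect to `v`. -/
def DirectedWrt {d : ℕ} (M : Set (EuclideanSpace ℝ (Fin d)))
    (v : EuclideanSpace ℝ (Fin d)) : Prop :=
  ∀ x : EuclideanSpace ℝ (Fin d), ∀ ρ : ℝ, 0 < ρ →
    Antitone (fun t : ℝ => approxDensity M ρ (x + t • v))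

/-- Measure-theoretic interior. -/
def mInterior {d : ℕ} (M : Set (EuclideanSpace ℝ (Fin d))) :
    Set (EuclideanSpace ℝ (Fin d)) :=
  {x | ∃ ρ > (0 : ℝ), volume (ball x ρ \ M) = 0}

/-- Measure-theoretic exterior. -/
def mExterior {d : ℕ} (M : Set (EuclideanSpace ℝ (Fin d))) :
    Set (EuclideanSpace ℝ (Fin d)) :=
  {x | ∃ ρ > (0 : ℝ), volume (M ∩ ball x ρ) = 0}

/-- Measure-theoretic boundary. -/
def mBoundary {d : ℕ} (M : Set (EuclideanSpace ℝ (Fin d))) :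
    Set (EuclideanSpace ℝ (Fin d)) :=
  (mInterior M ∪ mExterior M)ᶜ

/-! ### Auxiliary material -/

open Set Filter

/-- The cylinder over a set. -/
def cylSet {n : ℕ} (A : Set (EuclideanSpace ℝ (Fin n))) :
    Set (EuclideanSpace ℝ (Fin (n + 1))) :=
  {y : EuclideanSpace ℝ (Fin (n + 1)) |
    (WithLp.toLp 2 (fun i : Fin n => y i.castSucc) : EuclideanSpace ℝ (Fin n)) ∈ A}

lemma vol_inter_ball_translate {d : ℕ} (S : Set (EuclideanSpace ℝ (Fin d)))
    (w y : EuclideanSpace ℝ (Fin d)) (ρ : ℝ) :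
    volume (S ∩ ball (y + w) ρ) = volume (((· + w) ⁻¹' S) ∩ ball y ρ) := by
  have hset : ((· + w) ⁻¹' (S ∩ ball (y + w) ρ)) = ((· + w) ⁻¹' S) ∩ ball y ρ := by
    ext z
    simp [mem_ball, dist_add_right]
  rw [← hset, measure_preimage_add_right]

/-- If translating by `w` does not increase any localized measure, the translate is
a.e. contained in the original set. -/
lemma shift_null {d : ℕ} [Nontrivial (EuclideanSpace ℝ (Fin d))]
    (S : Set (EuclideanSpace ℝ (Fin d))) (hS : MeasurableSet S)
    (w : EuclideanSpace ℝ (Fin d))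
    (h : ∀ y ρ, 0 < ρ → volume (((· + w) ⁻¹' S) ∩ ball y ρ) ≤ volume (S ∩ ball y ρ)) :
    volume (((· + w) ⁻¹' S) \ S) = 0 := by
  set N := ((· + w) ⁻¹' S) \ S with hNdef
  have hNm : MeasurableSet N := (hS.preimage (measurable_add_const w)).diff hS
  by_contra hpos
  have hne : (volume.restrict N) ≠ 0 := by
    simpa [Measure.restrict_eq_zero] using hpos
  have : (ae (volume.restrict N)).NeBot := ae_neBot.mpr hne
  obtain ⟨x, hx⟩ := (Besicovitch.ae_tendsto_measure_inter_div volume N).exists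
  have key : ∀ r : ℝ, 0 < r →
      volume (N ∩ closedBall x r) / volume (closedBall x r) ≤ 1 / 2 := by
    intro r hr
    have hcb : volume (closedBall x r) = volume (ball x r) :=
      Measure.addHaar_closedBall_eq_addHaar_ball volume x r
    have hcbN : volume (N ∩ closedBall x r) = volume (N ∩ ball x r) := by
      refine le_antisymm ?_ (measure_mono (inter_subset_inter_right _ ball_subset_closedBall))
      have h1 : volume (N ∩ closedBall x r)
          ≤ volume (N ∩ ball x r) + volume (sphere x r) := by
        rw [← ball_union_sphere, inter_union_distrib_left]
        exact (measure_union_le _ _).trans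
          (add_le_add_right (measure_mono inter_subset_right) _)
      simpa [Measure.addHaar_sphere volume x r] using h1
    have h1 : volume (N ∩ ball x r) ≤ volume (((· + w) ⁻¹' S) ∩ ball x r) :=
      measure_mono (inter_subset_inter_left _ diff_subset)
    have h2 := h x r hr
    have hdisj : Disjoint (S ∩ ball x r) (N ∩ ball x r) := by
      refine Set.disjoint_left.mpr ?_
      rintro z ⟨hzS, -⟩ ⟨hzN, -⟩
      exact hzN.2 hzS
    have h3 : volume (S ∩ ball x r) + volume (N ∩ ball x r) ≤ volume (ball x r) := by
      rw [← measure_union hdisj (hNm.inter measurableSet_ball)]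
      exact measure_mono (union_subset inter_subset_right inter_subset_right)
    have h4 : volume (N ∩ ball x r) * 2 ≤ volume (ball x r) := by
      rw [mul_two]
      exact (add_le_add_left (h1.trans h2) _).trans h3
    have hb0 : volume (ball x r) ≠ 0 := (measure_ball_pos volume x hr).ne'
    have hbt : volume (ball x r) ≠ ⊤ := measure_ball_lt_top.ne
    rw [hcb, hcbN, ENNReal.div_le_iff hb0 hbt]
    have : (1 / 2 : ENNReal) * volume (ball x r) = volume (ball x r) / 2 := by
      rw [one_div, mul_comm, div_eq_mul_inv]
    rw [this]
    exact (ENNReal.le_div_iff_mul_le (Or.inl two_ne_zero)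
      (Or.inl ENNReal.ofNat_ne_top)).mpr h4
  have h12 : (1 / 2 : ENNReal) < 1 := ENNReal.half_lt_self one_ne_zero ENNReal.one_ne_top
  have hev := hx.eventually (Ioi_mem_nhds h12)
  obtain ⟨r, hgt, hr⟩ := (hev.and self_mem_nhdsWithin).exists
  exact absurd (key r hr) (not_le.mpr hgt)

lemma cylSet_eq {n : ℕ} (A : Set (EuclideanSpace ℝ (Fin n))) :
    cylSet A = ((MeasurableEquiv.toLp 2 (Fin (n + 1) → ℝ)).symm) ⁻¹'
      ((MeasurableEquiv.piFinSuccAbove (fun _ : Fin (n + 1) => ℝ) (Fin.last n)) ⁻¹'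
        (univ ×ˢ (((MeasurableEquiv.toLp 2 (Fin n → ℝ)).symm).symm ⁻¹' A))) := by
  ext y
  simp [cylSet, MeasurableEquiv.piFinSuccAbove, Fin.removeNth, Fin.succAbove_last,
    MeasurableEquiv.toLp, Fin.insertNthEquiv]
  exact Iff.rfl

lemma cylSet_measurableSet {n : ℕ} {A : Set (EuclideanSpace ℝ (Fin n))}
    (hA : MeasurableSet A) : MeasurableSet (cylSet A) := by
  rw [cylSet_eq]
  exact ((MeasurableSet.univ.prod
      (hA.preimage ((MeasurableEquiv.toLp 2 (Fin n → ℝ)).symm).symm.measurable)).preimage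
      (MeasurableEquiv.piFinSuccAbove (fun _ : Fin (n + 1) => ℝ) (Fin.last n)).measurable).preimage
      ((MeasurableEquiv.toLp 2 (Fin (n + 1) → ℝ)).symm).measurable

lemma cylSet_volume_zero {n : ℕ} {A : Set (EuclideanSpace ℝ (Fin n))}
    (hA : MeasurableSet A) (h : volume (cylSet A) = 0) : volume A = 0 := by
  set A' : Set (Fin n → ℝ) := ((MeasurableEquiv.toLp 2 (Fin n → ℝ)).symm).symm ⁻¹' A with hA'def
  have hA' : MeasurableSet A' :=
    hA.preimage ((MeasurableEquiv.toLp 2 (Fin n → ℝ)).symm).symm.measurable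
  have hvolA' : volume A' = volume A :=
    (MeasurePreserving.symm _
      (EuclideanSpace.volume_preserving_symm_measurableEquiv_toLp (Fin n))).measure_preimage
      hA.nullMeasurableSet
  have h1 : volume (cylSet A) = volume (univ ×ˢ A' : Set (ℝ × (Fin n → ℝ))) := by
    rw [cylSet_eq,
      (EuclideanSpace.volume_preserving_symm_measurableEquiv_toLp (Fin (n + 1))).measure_preimage
        (((MeasurableSet.univ.prod hA').preimage
          (MeasurableEquiv.piFinSuccAbove (fun _ : Fin (n + 1) => ℝ)
            (Fin.last n)).measurable).nullMeasurableSet),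
      (volume_preserving_piFinSuccAbove (fun _ : Fin (n + 1) => ℝ)
        (Fin.last n)).measure_preimage (MeasurableSet.univ.prod hA').nullMeasurableSet]
  rw [h1, Measure.volume_eq_prod, Measure.prod_prod, Real.volume_univ] at h
  rcases mul_eq_zero.mp h with h' | h'
  · exact absurd h' (by simp)
  · rw [← hvolA', h']

lemma cyl_shift {n : ℕ} (A : Set (EuclideanSpace ℝ (Fin n)))
    (s : ℝ) (xhat : EuclideanSpace ℝ (Fin n)) (t : ℝ) :
    (· + s • pairPoint xhat t) ⁻¹' (cylSet A) = cylSet ((· + s • xhat) ⁻¹' A) := by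
  ext y
  set z : EuclideanSpace ℝ (Fin n) := WithLp.toLp 2 (fun i : Fin n => y i.castSucc) with hz
  have hkey : WithLp.toLp 2 (fun i : Fin n => (y + s • pairPoint xhat t) i.castSucc) = z + s • xhat := by
    ext i
    simp [hz, pairPoint, Fin.snoc_castSucc, PiLp.add_apply, PiLp.smul_apply]
  simp only [cylSet, Set.mem_preimage, Set.mem_setOf_eq, hkey, hz]

theorem direction_of_cylinder_projects {n : ℕ}
    (M : Set (EuclideanSpace ℝ (Fin n))) (hM : MeasurableSet M)
    (xhat : EuclideanSpace ℝ (Fin n)) (t : ℝ) (hxhat : xhat ≠ 0)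
    (hdir : DirectedWrt
      {y : EuclideanSpace ℝ (Fin (n + 1)) |
        (WithLp.toLp 2 (fun i : Fin n => y i.castSucc) : EuclideanSpace ℝ (Fin n)) ∈ M}
      (pairPoint xhat t)) :
    DirectedWrt M xhat := by
  have hdir' : DirectedWrt (cylSet M) (pairPoint xhat t) := hdir
  intro x ρ hρ τ1 τ2 hle
  set v := pairPoint xhat t with hv
  set s := τ2 - τ1 with hs
  have hs0 : (0 : ℝ) ≤ s := sub_nonneg.mpr hle
  have hC : MeasurableSet (cylSet M) := cylSet_measurableSet hM
  -- numerator inequality for the cylinder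
  have hnum : ∀ (y : EuclideanSpace ℝ (Fin (n + 1))) (ρ' : ℝ), 0 < ρ' →
      volume (((· + s • v) ⁻¹' cylSet M) ∩ ball y ρ')
        ≤ volume (cylSet M ∩ ball y ρ') := by
    intro y ρ' hρ'
    have hant := hdir' y ρ' hρ' hs0
    have hd : volume (ball (y + s • v) ρ') = volume (ball y ρ') := by
      rw [Measure.addHaar_ball_center volume (y + s • v),
        Measure.addHaar_ball_center volume y]
    have hb0 : volume (ball y ρ') ≠ 0 := (measure_ball_pos volume y hρ').ne'
    have hbt : volume (ball y ρ') ≠ ⊤ := measure_ball_lt_top.ne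
    have h' : volume (cylSet M ∩ ball (y + s • v) ρ') / volume (ball y ρ')
        ≤ volume (cylSet M ∩ ball y ρ') / volume (ball y ρ') := by
      simpa [approxDensity, hd, zero_smul] using hant
    have hab : volume (cylSet M ∩ ball (y + s • v) ρ')
        ≤ volume (cylSet M ∩ ball y ρ') := by
      calc volume (cylSet M ∩ ball (y + s • v) ρ')
          = volume (cylSet M ∩ ball (y + s • v) ρ') / volume (ball y ρ')
              * volume (ball y ρ') := (ENNReal.div_mul_cancel hb0 hbt).symm
        _ ≤ volume (cylSet M ∩ ball y ρ') / volume (ball y ρ')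
              * volume (ball y ρ') := mul_le_mul_left h' _
        _ = volume (cylSet M ∩ ball y ρ') := ENNReal.div_mul_cancel hb0 hbt
    rw [← vol_inter_ball_translate]
    exact hab
  -- the shifted cylinder is a.e. contained in the cylinder
  have hshift : volume (((· + s • v) ⁻¹' cylSet M) \ cylSet M) = 0 :=
    shift_null (cylSet M) hC (s • v) hnum
  -- hence the shifted base set is a.e. contained in the base set
  have hN : volume ((((· + s • xhat) ⁻¹' M) \ M : Set (EuclideanSpace ℝ (Fin n)))) = 0 := by
    apply cylSet_volume_zero ((hM.preimage (measurable_add_const _)).diff hM)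
    have hcyl : cylSet (((· + s • xhat) ⁻¹' M) \ M)
        = ((· + s • v) ⁻¹' cylSet M) \ cylSet M := by
      have hrfl : cylSet (((· + s • xhat) ⁻¹' M) \ M)
          = cylSet ((· + s • xhat) ⁻¹' M) \ cylSet M := rfl
      rw [hrfl, hv, ← cyl_shift M s xhat t]
    rw [hcyl]
    exact hshift
  -- conclude
  have hc2 : x + τ2 • xhat = (x + τ1 • xhat) + s • xhat := by
    rw [hs, add_assoc, ← add_smul]
    ring_nf
  have hnum2 : volume (M ∩ ball (x + τ2 • xhat) ρ)
      ≤ volume (M ∩ ball (x + τ1 • xhat) ρ) := by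
    rw [hc2, vol_inter_ball_translate]
    calc volume (((· + s • xhat) ⁻¹' M) ∩ ball (x + τ1 • xhat) ρ)
        ≤ volume ((M ∩ ball (x + τ1 • xhat) ρ) ∪ (((· + s • xhat) ⁻¹' M) \ M)) := by
          apply measure_mono
          rintro z ⟨hz1, hz2⟩
          by_cases hzM : z ∈ M
          · exact Or.inl ⟨hzM, hz2⟩
          · exact Or.inr ⟨hz1, hzM⟩
      _ ≤ volume (M ∩ ball (x + τ1 • xhat) ρ)
            + volume (((· + s • xhat) ⁻¹' M) \ M) := measure_union_le _ _
      _ = volume (M ∩ ball (x + τ1 • xhat) ρ) := by rw [hN, add_zero]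
  have hd : volume (ball (x + τ2 • xhat) ρ) = volume (ball (x + τ1 • xhat) ρ) := by
    rw [Measure.addHaar_ball_center volume (x + τ2 • xhat),
      Measure.addHaar_ball_center volume (x + τ1 • xhat)]
  show approxDensity M ρ (x + τ2 • xhat) ≤ approxDensity M ρ (x + τ1 • xhat)
  rw [approxDensity, approxDensity, hd]
  exact ENNReal.div_le_div_right hnum2 _
end
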